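/- arXiv:2506.19881 — 5 statements merged into one kernel-verified Lean document; each statement's English description precedes it below -/
import Mathlib

section
/- Let q1 and q2 be models and x a prompt with d_TV(q1(·|x), q2(·|x)) < 1. Define the Copy-Protection model p by p(y|x) = min{q1(y|x), q2(y|x)} / Z(x), where Z(x) = ∑_y min{q1(y|x), q2(y|x)}. Then for i = 1, 2: Δ_max(p(·|x) ‖ q_i(·|x)) ≤ −log₂(1 − d_TV(q1(·|x), q2(·|x))). Consequently, p is k_x-NAF on prompt x with respect to any C ⊆ W and any safe function that maps each c ∈ C to q1 or q2, with k_x = −log₂(1 − d_TV(q1(·|x), q2(·|x))). -/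
open scoped ENNReal

/-- `Δ_max(p‖q) ≤ k` (base-2 max KL divergence): for every outcome `y` in the
support of `p`, `log₂(p y / q y) ≤ k`, i.e. `p y ≤ 2^k * q y`. -/
def DmaxLe {W : Type*} (p q : PMF W) (k : ℝ) : Prop :=
  ∀ y, p y ≠ 0 → p y ≤ (2 : ℝ≥0∞) ^ k * q y

/-- Total variation distance between two PMFs: `(1/2) ∑_y |p(y) − q(y)|`. -/
noncomputable def dTV {W : Type*} (p q : PMF W) : ℝ :=
  (1 / 2) * ∑' y, |(p y).toReal - (q y).toReal|

private lemma min_eq_half_aux (a b : ℝ) : min a b = (a + b - |a - b|) / 2 := by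
  rcases le_total a b with h | h
  · rw [min_eq_left h, abs_of_nonpos (by linarith)]; ring
  · rw [min_eq_right h, abs_of_nonneg (by linarith)]; ring

/-- if `d_TV(q1(·|x), q2(·|x)) < 1` and `p` is the Copy-Protection
model `p(y|x) = min{q1(y|x), q2(y|x)} / Z(x)` with `Z(x) = ∑_y min{q1(y|x), q2(y|x)}`,
then `Δ_max(p(·|x) ‖ q_i(·|x)) ≤ −log₂(1 − d_TV(q1(·|x), q2(·|x)))` for `i = 1, 2`;
consequently `p` is `k_x`-NAF on `x` w.r.t. any `C` and any `safe` mapping each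
`c ∈ C` to `q1` or `q2`, with `k_x = −log₂(1 − d_TV)`. -/
theorem cp_is_naf {W X : Type*} [Countable W]
    (q1 q2 : X → PMF W) (x : X)
    (hd : dTV (q1 x) (q2 x) < 1)
    (p : PMF W)
    (hp : ∀ y, p y = min (q1 x y) (q2 x y) / (∑' z, min (q1 x z) (q2 x z))) :
    (DmaxLe p (q1 x) (-Real.logb 2 (1 - dTV (q1 x) (q2 x))) ∧
      DmaxLe p (q2 x) (-Real.logb 2 (1 - dTV (q1 x) (q2 x)))) ∧
    (∀ (C : Set W) (safe : W → X → PMF W),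
      (∀ c ∈ C, safe c x = q1 x ∨ safe c x = q2 x) →
      ∀ c ∈ C, DmaxLe p (safe c x) (-Real.logb 2 (1 - dTV (q1 x) (q2 x)))) := by
  set t : ℝ := dTV (q1 x) (q2 x) with ht
  set k : ℝ := -Real.logb 2 (1 - t) with hk
  set Z : ℝ≥0∞ := ∑' z, min (q1 x z) (q2 x z) with hZ
  have ht1 : 0 < 1 - t := by linarith
  set a : W → ℝ := fun y => (q1 x y).toReal with ha
  set b : W → ℝ := fun y => (q2 x y).toReal with hb
  have hane : ∀ y, q1 x y ≠ ⊤ := fun y => PMF.apply_ne_top _ y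
  have hbne : ∀ y, q2 x y ≠ ⊤ := fun y => PMF.apply_ne_top _ y
  have hsa : ∑' y, a y = 1 := by
    rw [ha, ← ENNReal.tsum_toReal_eq hane, PMF.tsum_coe, ENNReal.toReal_one]
  have hsb : ∑' y, b y = 1 := by
    rw [hb, ← ENNReal.tsum_toReal_eq hbne, PMF.tsum_coe, ENNReal.toReal_one]
  have hsuma : Summable a :=
    ENNReal.summable_toReal (by rw [PMF.tsum_coe]; exact ENNReal.one_ne_top)
  have hsumb : Summable b :=
    ENNReal.summable_toReal (by rw [PMF.tsum_coe]; exact ENNReal.one_ne_top)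
  have habs : Summable (fun y => |a y - b y|) := (hsuma.sub hsumb).abs
  -- Z.toReal = 1 - t
  have hZreal : Z.toReal = 1 - t := by
    have h1 : Z.toReal = ∑' y, min (a y) (b y) := by
      rw [hZ, ENNReal.tsum_toReal_eq (fun y => by
        exact ne_top_of_le_ne_top (hane y) (min_le_left _ _))]
      exact tsum_congr fun y => ENNReal.toReal_min (hane y) (hbne y)
    rw [h1]
    have h2 : ∀ y, min (a y) (b y) = (a y + b y - |a y - b y|) / 2 :=
      fun y => min_eq_half_aux _ _
    calc ∑' y, min (a y) (b y) = ∑' y, (a y + b y - |a y - b y|) / 2 :=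
          tsum_congr h2
      _ = (∑' y, (a y + b y - |a y - b y|)) / 2 := by
          rw [tsum_div_const]
      _ = ((∑' y, (a y + b y)) - ∑' y, |a y - b y|) / 2 := by
          rw [Summable.tsum_sub (hsuma.add hsumb) habs]
      _ = ((1 + 1) - ∑' y, |a y - b y|) / 2 := by
          rw [Summable.tsum_add hsuma hsumb, hsa, hsb]
      _ = 1 - t := by rw [ht]; simp [dTV, ha, hb]; ring
  have hZtop : Z ≠ ⊤ := by
    have : Z ≤ 1 := by
      rw [hZ, ← PMF.tsum_coe (q1 x)]
      exact ENNReal.tsum_le_tsum fun y => min_le_left _ _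
    exact ne_top_of_le_ne_top ENNReal.one_ne_top this
  have hZ0 : Z ≠ 0 := by
    intro h
    rw [h, ENNReal.toReal_zero] at hZreal
    linarith
  have hpow : (2 : ℝ≥0∞) ^ k = Z⁻¹ := by
    have hz : Z = ENNReal.ofReal (1 - t) := by
      rw [← hZreal, ENNReal.ofReal_toReal hZtop]
    have hr : (2 : ℝ) ^ k = (1 - t)⁻¹ := by
      rw [hk, Real.rpow_neg (by norm_num), Real.rpow_logb (by norm_num) (by norm_num) ht1]
    rw [hz, ← ENNReal.ofReal_inv_of_pos ht1, ← hr,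
      show ((2 : ℝ≥0∞)) = ENNReal.ofReal (2 : ℝ) by simp]
    exact ENNReal.ofReal_rpow_of_pos (show (0:ℝ) < 2 by norm_num)
  have hmain : ∀ q : PMF W, (∀ y, min (q1 x y) (q2 x y) ≤ q y) → DmaxLe p q k := by
    intro q hq y _
    rw [hp y, hpow, div_eq_mul_inv, mul_comm]
    exact mul_le_mul_right (hq y) _
  have h1 : DmaxLe p (q1 x) k := hmain _ fun y => min_le_left _ _
  have h2 : DmaxLe p (q2 x) k := hmain _ fun y => min_le_right _ _
  refine ⟨⟨h1, h2⟩, fun C safe hsafe c hc => ?_⟩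
  rcases hsafe c hc with h | h <;> rw [h]
  · exact h1
  · exact h2
end

section
/- Let D be a finite dataset of works partitioned into disjoint sublists D1 and D2, and let ideas : W → X. For i = 1, 2 define the model q_i by: on prompt x, if D_i^x = {w ∈ D_i : ideas(w) = x} is nonempty, then q_i(·|x) is uniform on D_i^x; otherwise q_i(·|x) = r_i(·|x), where r_i is a model with full support (r_i(y|x) > 0 for every prompt x and every y ∈ W). Define the Copy-Protection model p(y|x) = min{q1(y|x), q2(y|x)} / Z(x) with Z(x) = ∑_y min{q1(y|x), q2(y|x)}. Then for every c ∈ D whose ideas are distinct in D (i.e., no w ∈ D with w ≠ c has ideas(w) = ideas(c)): Z(ideas(c)) > 0, so p(·|ideas(c)) is well-defined, and p(c | ideas(c)) = 1. -/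
open scoped ENNReal

lemma cp_key {W : Type*} (u v : W → ℝ≥0∞) (c : W)
    (huc : u c = 1) (hu0 : ∀ y, y ≠ c → u y = 0) (hvc : v c ≠ 0) :
    0 < (∑' y, min (u y) (v y)) ∧
      min (u c) (v c) / (∑' y, min (u y) (v y)) = 1 := by
  have hsum : (∑' y, min (u y) (v y)) = min (u c) (v c) := by
    refine tsum_eq_single c fun y hy => ?_
    simp [hu0 y hy]
  have hne : min (u c) (v c) ≠ 0 := by
    rw [huc]
    exact ne_of_gt (lt_min one_pos (pos_iff_ne_zero.mpr hvc))
  have htop : min (u c) (v c) ≠ ⊤ := by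
    refine ne_top_of_le_ne_top ?_ (min_le_left _ _)
    simp [huc]
  rw [hsum]
  exact ⟨pos_iff_ne_zero.mpr hne, ENNReal.div_self hne htop⟩


/-- sharded-safe models `q1, q2` built from a partition `D = D1 ++ D2`
(uniform on `D_i^x = {w ∈ D_i : ideas w = x}` when nonempty, otherwise a full-support
model `r_i`), combined by the Copy-Protection rule
`p(y|x) = min{q1(y|x), q2(y|x)} / Z(x)`.  For any `c ∈ D` whose ideas are distinct in
`D`, the normalizer `Z(ideas c)` is positive (so `p(·|ideas c)` is well-defined) and
`p(c | ideas c) = 1`. -/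
theorem cp_regurgitates {W X : Type*} [Countable W] [DecidableEq W] [DecidableEq X]
    (ideas : W → X)
    (D D1 D2 : List W)
    (hD : D = D1 ++ D2)
    (hdisj : ∀ w ∈ D1, w ∉ D2)
    (r1 r2 : X → PMF W)
    (hr1 : ∀ x y, r1 x y ≠ 0) (hr2 : ∀ x y, r2 x y ≠ 0)
    (q1 q2 : X → PMF W)
    (hq1u : ∀ x (h : ((D1.filter fun w => decide (ideas w = x)).toFinset).Nonempty),
      q1 x = PMF.uniformOfFinset _ h)
    (hq1e : ∀ x, (D1.filter fun w => decide (ideas w = x)).toFinset = ∅ → q1 x = r1 x)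
    (hq2u : ∀ x (h : ((D2.filter fun w => decide (ideas w = x)).toFinset).Nonempty),
      q2 x = PMF.uniformOfFinset _ h)
    (hq2e : ∀ x, (D2.filter fun w => decide (ideas w = x)).toFinset = ∅ → q2 x = r2 x)
    (c : W) (hc : c ∈ D)
    (hdistinct : ∀ w ∈ D, w ≠ c → ideas w ≠ ideas c) :
    0 < (∑' y, min (q1 (ideas c) y) (q2 (ideas c) y)) ∧
    min (q1 (ideas c) c) (q2 (ideas c) c)
        / (∑' y, min (q1 (ideas c) y) (q2 (ideas c) y)) = 1 := by
  set x := ideas c with hx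
  rcases (by rw [hD] at hc; exact List.mem_append.mp hc) with h1 | h2
  · -- c ∈ D1
    have hF1 : (D1.filter fun w => decide (ideas w = x)).toFinset = {c} := by
      ext w
      simp only [List.mem_toFinset, List.mem_filter, decide_eq_true_eq, Finset.mem_singleton]
      constructor
      · rintro ⟨hw, hwi⟩
        by_contra hne
        exact hdistinct w (hD ▸ List.mem_append.mpr (Or.inl hw)) hne hwi
      · rintro rfl; exact ⟨h1, rfl⟩
    have hF2 : (D2.filter fun w => decide (ideas w = x)).toFinset = ∅ := by
      ext w
      simp only [List.mem_toFinset, List.mem_filter, decide_eq_true_eq, Finset.notMem_empty,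
        iff_false, not_and]
      intro hw hwi
      have hne : w ≠ c := fun h => hdisj c h1 (h ▸ hw)
      exact hdistinct w (hD ▸ List.mem_append.mpr (Or.inr hw)) hne hwi
    have hne1 : ((D1.filter fun w => decide (ideas w = x)).toFinset).Nonempty := by
      rw [hF1]; exact Finset.singleton_nonempty c
    have hq1 := hq1u x hne1
    have hq2 := hq2e x hF2
    refine cp_key (q1 x) (q2 x) c ?_ ?_ ?_
    · rw [hq1]; simp [PMF.uniformOfFinset_apply, hF1]
    · intro y hy; rw [hq1]; simp [PMF.uniformOfFinset_apply, hF1, hy]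
    · rw [hq2]; exact hr2 x c
  · -- c ∈ D2
    have hF2 : (D2.filter fun w => decide (ideas w = x)).toFinset = {c} := by
      ext w
      simp only [List.mem_toFinset, List.mem_filter, decide_eq_true_eq, Finset.mem_singleton]
      constructor
      · rintro ⟨hw, hwi⟩
        by_contra hne
        exact hdistinct w (hD ▸ List.mem_append.mpr (Or.inr hw)) hne hwi
      · rintro rfl; exact ⟨h2, rfl⟩
    have hF1 : (D1.filter fun w => decide (ideas w = x)).toFinset = ∅ := by
      ext w
      simp only [List.mem_toFinset, List.mem_filter, decide_eq_true_eq, Finset.notMem_empty,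
        iff_false, not_and]
      intro hw hwi
      have hne : w ≠ c := fun h => hdisj w hw (h ▸ h2)
      exact hdistinct w (hD ▸ List.mem_append.mpr (Or.inl hw)) hne hwi
    have hne2 : ((D2.filter fun w => decide (ideas w = x)).toFinset).Nonempty := by
      rw [hF2]; exact Finset.singleton_nonempty c
    have hq2 := hq2u x hne2
    have hq1 := hq1e x hF1
    have key := cp_key (q2 x) (q1 x) c ?_ ?_ ?_
    · simpa [min_comm] using key
    · rw [hq2]; simp [PMF.uniformOfFinset_apply, hF2]
    · intro y hy; rw [hq2]; simp [PMF.uniformOfFinset_apply, hF2, hy]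
    · rw [hq1]; exact hr1 x c
end

section
/- Fix a real 0 < k < 1 and let β = 2^k − 1. For a bitstring D ∈ {0,1}^L, define the model p_{k,D} : ℕ → PMF({0,1}) by: for prompts x with 1 ≤ x ≤ L, p_{k,D}(·|x) = Bernoulli(1/2 + β(D[x] − 1/2)); for all other prompts x, p_{k,D}(·|x) = Bernoulli(1/2). Then for every prompt x, Δ_max(p_{k,D}(·|x) ‖ Bernoulli(1/2)) ≤ log₂(1 + β) = k; that is, p_{k,D} is k-NAF with respect to any C and the safe function coin_1 that always returns the uniform distribution on {0,1}. -/
open scoped ENNReal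

/-- fix `0 < k < 1` and `β = 2^k − 1`.  The model `p_{k,D}` that on
prompts `1 ≤ x ≤ L` is `Bernoulli(1/2 + β(D[x] − 1/2))` (probability `(1+β)/2` on the
bit `D[x]` and `(1−β)/2` on the other bit) and otherwise `Bernoulli(1/2)` satisfies
`Δ_max(p_{k,D}(·|x) ‖ Bernoulli(1/2)) ≤ log₂(1 + β) = k` for every prompt `x`; i.e.
it is `k`-NAF w.r.t. any `C` and the safe function `coin_1`. -/
theorem biased_coin_model_is_naf (k : ℝ) (hk0 : 0 < k) (hk1 : k < 1) (L : ℕ)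
    (D : ℕ → Bool)
    (p : ℕ → PMF Bool)
    (hp1 : ∀ x, 1 ≤ x → x ≤ L → ∀ b : Bool,
      p x b = ENNReal.ofReal
        (if b = D x then (1 + ((2 : ℝ) ^ k - 1)) / 2 else (1 - ((2 : ℝ) ^ k - 1)) / 2))
    (hp2 : ∀ x, ¬(1 ≤ x ∧ x ≤ L) → ∀ b : Bool, p x b = 1 / 2) :
    (∀ x, DmaxLe (p x) (PMF.uniformOfFintype Bool) k) ∧
    Real.logb 2 (1 + ((2 : ℝ) ^ k - 1)) = k := by
  have h2k1 : (1:ℝ) ≤ (2:ℝ)^k := Real.one_le_rpow (by norm_num) hk0.le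
  have hbound : ∀ b : Bool, ((2 : ℝ≥0∞) ^ k * (PMF.uniformOfFintype Bool) b)
      = ENNReal.ofReal ((2:ℝ)^k/2) := by
    intro b
    simp [PMF.uniformOfFintype_apply]
    rw [ENNReal.ofReal_div_of_pos (by norm_num), ← ENNReal.ofReal_rpow_of_pos (by norm_num)]
    simp [ENNReal.ofReal_ofNat]
    rfl
  constructor
  · intro x b _
    rw [hbound]
    by_cases hx : 1 ≤ x ∧ x ≤ L
    · rw [hp1 x hx.1 hx.2 b]
      apply ENNReal.ofReal_le_ofReal
      by_cases hb : b = D x <;> simp [hb] <;> linarith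
    · rw [hp2 x hx b]
      rw [show ((1:ℝ≥0∞)/2) = ENNReal.ofReal (1/2) by
        rw [ENNReal.ofReal_div_of_pos (by norm_num)]; simp]
      apply ENNReal.ofReal_le_ofReal
      linarith
  · rw [show (1 + ((2:ℝ)^k - 1)) = (2:ℝ)^k by ring]
    rw [Real.logb_rpow (by norm_num)]
    norm_num
end

section
/- Let Train_0 be any training algorithm and ideas : W → X. Define Train_kv as follows: on dataset D, it samples q_0 ← Train_0(D) and returns the model q_kv where, on prompt x, if D_x = {w ∈ D : ideas(w) = x} is nonempty, q_kv(·|x) is uniform on D_x, and otherwise q_kv(·|x) = q_0(·|x). Then Train_kv is tainted with respect to ideas: the user u defined by u(p, aux) = p(·|aux) satisfies, for every dataset D and every w ∈ D, τ(D_{ideas(w)}; ideas(w)) = 1, and hence τ(SubSim(D); ideas(w)) = 1 > 0.99. -/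
open scoped ENNReal

/-- The user's output distribution `τ(·; aux)`: sample a model `p ← Train(D)`, then
sample `z ← u(p, aux)`. -/
noncomputable def tau {W X A : Type*} (Train : List W → PMF (X → PMF W))
    (u : (X → PMF W) → A → PMF W) (D : List W) (aux : A) : PMF W :=
  (Train D).bind fun p => u p aux

/-- The key–value training algorithm `Train_kv`: sample `q0 ← Train0(D)`; the
resulting model, on prompt `x`, is uniform on `D_x = {w ∈ D : ideas w = x}` when that
set is nonempty, and otherwise behaves as `q0(·|x)`. -/
noncomputable def TrainKV {W X : Type*} [DecidableEq W] [DecidableEq X]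
    (Train0 : List W → PMF (X → PMF W)) (ideas : W → X) (D : List W) :
    PMF (X → PMF W) :=
  (Train0 D).map fun q0 x =>
    if h : ((D.filter fun v => decide (ideas v = x)).toFinset).Nonempty then
      PMF.uniformOfFinset _ h
    else q0 x

/-- `Train_kv` is tainted with respect to `ideas`: the user
`u(p, aux) = p(·|aux)` satisfies, for every dataset `D` and every `w ∈ D`,
`τ(D_{ideas w}; ideas w) = 1`, and hence `τ(SubSim(D); ideas w) = 1 > 0.99`. -/
theorem trainKV_is_tainted {W X : Type*} [Countable W] [DecidableEq W] [DecidableEq X]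
    (Train0 : List W → PMF (X → PMF W))
    (ideas : W → X)
    (SubSim : W → Set W) (hrefl : ∀ v, v ∈ SubSim v)
    (D : List W) (w : W) (hw : w ∈ D) :
    (tau (TrainKV Train0 ideas) (fun p aux => p aux) D (ideas w)).toOuterMeasure
        {v | v ∈ D ∧ ideas v = ideas w} = 1 ∧
    (tau (TrainKV Train0 ideas) (fun p aux => p aux) D (ideas w)).toOuterMeasure
        {y | ∃ v ∈ D, y ∈ SubSim v} = 1 ∧
    (99 / 100 : ℝ≥0∞) <
      (tau (TrainKV Train0 ideas) (fun p aux => p aux) D (ideas w)).toOuterMeasure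
        {y | ∃ v ∈ D, y ∈ SubSim v} := by
  set τ := tau (TrainKV Train0 ideas) (fun p aux => p aux) D (ideas w) with hτ
  have hsub : τ.support ⊆ {v | v ∈ D ∧ ideas v = ideas w} := by
    intro v hv
    simp only [hτ, tau, TrainKV, PMF.support_bind, PMF.support_map, Set.mem_iUnion,
      Set.mem_image] at hv
    obtain ⟨p, ⟨q0, hq0, rfl⟩, hv⟩ := hv
    have hne : ((D.filter fun v => decide (ideas v = ideas w)).toFinset).Nonempty :=
      ⟨w, by simp [hw]⟩
    beta_reduce at hv
    rw [dif_pos hne, PMF.support_uniformOfFinset] at hv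
    simpa using hv
  have h1 : τ.toOuterMeasure {v | v ∈ D ∧ ideas v = ideas w} = 1 :=
    (PMF.toOuterMeasure_apply_eq_one_iff _ _).2 hsub
  have hsub2 : τ.support ⊆ {y | ∃ v ∈ D, y ∈ SubSim v} := fun v hv =>
    ⟨v, (hsub hv).1, hrefl v⟩
  have h2 : τ.toOuterMeasure {y | ∃ v ∈ D, y ∈ SubSim v} = 1 :=
    (PMF.toOuterMeasure_apply_eq_one_iff _ _).2 hsub2
  exact ⟨h1, h2, by rw [h2]; exact ENNReal.div_lt_of_lt_mul (by norm_num)⟩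
end

section
/- Suppose there exist works w0, w1 ∈ W such that ideas(w0) = ideas(w1) and SubSim(w0) ∩ SubSim(w1) = ∅. Then for any fixed model q, the constant training algorithm Train_q with Train_q(D) = q (point mass at q for every dataset D) is not tainted with respect to ideas. Concretely, for every user u there exist an i ∈ {0,1}, the dataset D_i = (w_i), and w_i ∈ D_i such that τ(SubSim(D_i); ideas(w_i)) ≤ 1/2 < 0.99. -/
open scoped ENNReal

/-- `Train` is tainted w.r.t. `ideas` (and `SubSim`) if some fixed user copies for
every dataset `D` and every `w ∈ D`: `τ(SubSim(D); ideas w) > 0.99`. -/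
def Tainted {W X A : Type*} (Train : List W → PMF (X → PMF W))
    (ideas : W → A) (SubSim : W → Set W) : Prop :=
  ∃ u : (X → PMF W) → A → PMF W, ∀ D : List W, ∀ w ∈ D,
    (99 / 100 : ℝ≥0∞) <
      (tau Train u D (ideas w)).toOuterMeasure {y | ∃ v ∈ D, y ∈ SubSim v}

/-- if there are works `w₀, w₁` with the same ideas but disjoint
substantial-similarity sets, then for any fixed model `q` the constant training
algorithm `Train_q(D) = q` is not tainted: for every user `u` there is `i ∈ {0,1}`
such that on the dataset `D_i = (w_i)` (with `w_i ∈ D_i`),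
`τ(SubSim(D_i); ideas w_i) ≤ 1/2 < 0.99`. -/
theorem constant_model_not_tainted {W X A : Type*} [Countable W]
    (ideas : W → A) (SubSim : W → Set W) (hrefl : ∀ v, v ∈ SubSim v)
    (w : Fin 2 → W)
    (hideas : ideas (w 0) = ideas (w 1))
    (hdisj : SubSim (w 0) ∩ SubSim (w 1) = ∅)
    (q : X → PMF W) :
    (∀ u : (X → PMF W) → A → PMF W,
      ∃ i : Fin 2,
        (tau (fun _ => PMF.pure q) u [w i] (ideas (w i))).toOuterMeasure
            {y | ∃ v ∈ [w i], y ∈ SubSim v} ≤ 1 / 2) ∧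
    ¬ Tainted (fun _ : List W => PMF.pure q) ideas SubSim := by
  have key : ∀ u : (X → PMF W) → A → PMF W,
      ∃ i : Fin 2,
        (tau (fun _ => PMF.pure q) u [w i] (ideas (w i))).toOuterMeasure
            {y | ∃ v ∈ [w i], y ∈ SubSim v} ≤ 1 / 2 := by
    intro u
    have htau : ∀ i : Fin 2,
        tau (fun _ => PMF.pure q) u [w i] (ideas (w i)) = u q (ideas (w 0)) := by
      intro i
      have : ideas (w i) = ideas (w 0) := by
        fin_cases i <;> simp [hideas]
      rw [tau, PMF.pure_bind, this]
    have hset : ∀ i : Fin 2,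
        {y | ∃ v ∈ [w i], y ∈ SubSim v} = SubSim (w i) := by
      intro i; ext y; simp
    set p := u q (ideas (w 0)) with hp
    have hmeas : ∀ i : Fin 2,
        (tau (fun _ => PMF.pure q) u [w i] (ideas (w i))).toOuterMeasure
            {y | ∃ v ∈ [w i], y ∈ SubSim v}
          = ∑' x, (SubSim (w i)).indicator p x := by
      intro i
      rw [htau i, hset i, PMF.toOuterMeasure_apply]
    have hsum : (∑' x, (SubSim (w 0)).indicator p x)
        + (∑' x, (SubSim (w 1)).indicator p x) ≤ 1 := by
      rw [← ENNReal.tsum_add]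
      have hle : ∀ x, (SubSim (w 0)).indicator p x
          + (SubSim (w 1)).indicator p x ≤ p x := by
        intro x
        by_cases h0 : x ∈ SubSim (w 0)
        · have h1 : x ∉ SubSim (w 1) := by
            intro h1
            have : x ∈ SubSim (w 0) ∩ SubSim (w 1) := ⟨h0, h1⟩
            simp [hdisj] at this
          simp [Set.indicator_of_mem h0, Set.indicator_of_notMem h1]
        · simp [Set.indicator_of_notMem h0]
          exact Set.indicator_le_self _ _ x
      calc ∑' x, ((SubSim (w 0)).indicator p x + (SubSim (w 1)).indicator p x)
          ≤ ∑' x, p x := ENNReal.tsum_le_tsum hle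
        _ = 1 := p.tsum_coe
    by_contra hcon
    push_neg at hcon
    have h0 := hcon 0
    have h1 := hcon 1
    rw [hmeas 0] at h0
    rw [hmeas 1] at h1
    have : (1 : ℝ≥0∞) < 1 := by
      calc (1 : ℝ≥0∞) = 1/2 + 1/2 := by rw [one_div, ENNReal.inv_two_add_inv_two]
        _ < (∑' x, (SubSim (w 0)).indicator p x)
            + (∑' x, (SubSim (w 1)).indicator p x) :=
          ENNReal.add_lt_add h0 h1
        _ ≤ 1 := hsum
    exact absurd this (lt_irrefl 1)
  refine ⟨key, ?_⟩
  rintro ⟨u, hu⟩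
  obtain ⟨i, hi⟩ := key u
  have := hu [w i] (w i) (by simp)
  have hlt : (99/100 : ℝ≥0∞) ≤ 1/2 := le_trans this.le hi
  have hlt2 : (1:ℝ≥0∞)/2 < 99/100 := by
    have h : (1:NNReal)/2 < 99/100 := by
      rw [div_lt_div_iff₀ (by norm_num) (by norm_num)]; norm_num
    have := ENNReal.coe_lt_coe.mpr h
    convert this using 2 <;> simp
  exact absurd hlt (not_le.mpr hlt2)
end
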